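/- Suppose P and Q are tree-structured joint distributions on the same set X of n finitely-valued variables, i.e. P is Markov with respect to a tree 𝒯_P on X and Q is Markov with respect to a tree 𝒯_Q on X, where the two trees may be distinct. Then there exists an ordering of the nodes into X_1, …, X_n and sets Π_i ⊆ {1, …, i−1} of cardinality at most 5 for all i, such that P and Q admit the common factorization P(x) = P_{X_1}(x_1)·∏_{i=2}^{n} P_{X_i | X_{Π_i}}(x_i | x_{Π_i}) and Q(x) = Q_{X_1}(x_1)·∏_{i=2}^{n} Q_{X_i | X_{Π_i}}(x_i | x_{Π_i}). -/

import Mathlib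

open scoped Classical in
/-- The marginal of a joint distribution `P` on coordinates in the finite set `T`. -/
noncomputable def marg {ι : Type*} [Fintype ι] {α : ι → Type*} [∀ i, Fintype (α i)]
    (P : (∀ i, α i) → ℝ) (T : Finset ι) : ((i : T) → α i) → ℝ :=
  fun y => ∑ x : ∀ i, α i, if (∀ i : T, x i = y i) then P x else 0

/-- A joint distribution `P` on finitely-valued variables indexed by the vertices of a
graph `T` is *Markov with respect to `T`* if, whenever a set `S` of vertices separates
vertex sets `A` and `B` in `T` (every walk from a point of `A` to a point of `B` meets
`S`), the variables `X_A` and `X_B` are conditionally independent given `X_S` under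
`P`, expressed pointwise via marginals:
`P_{A∪B∪S} · P_S = P_{A∪S} · P_{B∪S}`. -/
def IsTreeMarkov {V : Type*} [Fintype V] [DecidableEq V] {α : V → Type*}
    [∀ v, Fintype (α v)] (T : SimpleGraph V) (P : (∀ v, α v) → ℝ) : Prop :=
  ∀ A B S : Finset V,
    (∀ a ∈ A, ∀ b ∈ B, ∀ p : T.Walk a b, ∃ s ∈ S, s ∈ p.support) →
    ∀ x : ∀ v, α v,
      marg P (A ∪ B ∪ S) (fun v => x v.1) * marg P S (fun v => x v.1) =
        marg P (A ∪ S) (fun v => x v.1) * marg P (B ∪ S) (fun v => x v.1)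

set_option linter.unusedSectionVars false

open SimpleGraph Finset

section TreeSep

variable {V : Type*} [Fintype V] [DecidableEq V] {T : SimpleGraph V}

noncomputable def tpath (hT : T.IsTree) (a b : V) : T.Walk a b :=
  (hT.existsUnique_path a b).choose

lemma tpath_isPath (hT : T.IsTree) (a b : V) : (tpath hT a b).IsPath :=
  (hT.existsUnique_path a b).choose_spec.1

lemma tpath_eq (hT : T.IsTree) {a b : V} {p : T.Walk a b} (hp : p.IsPath) :
    p = tpath hT a b :=
  (hT.existsUnique_path a b).unique hp (tpath_isPath hT a b)

open scoped Classical in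
noncomputable def sep (hT : T.IsTree) (W : Finset V) (v : V) : Finset V :=
  (W.erase v).filter
    (fun w => ∀ u ∈ (tpath hT v w).support, u ∈ W → u = v ∨ u = w)

lemma mem_sep_iff (hT : T.IsTree) {W : Finset V} {v w : V} :
    w ∈ sep hT W v ↔ w ∈ W ∧ w ≠ v ∧
      ∀ u ∈ (tpath hT v w).support, u ∈ W → u = v ∨ u = w := by
  classical
  simp only [sep, Finset.mem_filter, Finset.mem_erase]
  tauto

lemma sep_subset (hT : T.IsTree) (W : Finset V) (v : V) :
    sep hT W v ⊆ W.erase v := by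
  intro w hw
  rw [mem_sep_iff] at hw
  exact Finset.mem_erase.2 ⟨hw.2.1, hw.1⟩

lemma sep_comm (hT : T.IsTree) {W : Finset V} {v w : V} (hv : v ∈ W) (hw : w ∈ W) :
    w ∈ sep hT W v ↔ v ∈ sep hT W w := by
  have key : ∀ a b : V, a ∈ W → b ∈ W → b ∈ sep hT W a → a ∈ sep hT W b := by
    intro a b _ hbW hba
    rw [mem_sep_iff] at hba ⊢
    obtain ⟨_, hne, hcond⟩ := hba
    have hrev : (tpath hT a b).reverse = tpath hT b a :=
      tpath_eq hT ((tpath_isPath hT a b).reverse)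
    refine ⟨‹a ∈ W›, fun h => hne h.symm, ?_⟩
    intro u hu huW
    rw [← hrev, Walk.support_reverse, List.mem_reverse] at hu
    rcases hcond u hu huW with h | h
    · exact Or.inr h
    · exact Or.inl h
  exact ⟨key v w hv hw, key w v hw hv⟩


lemma exists_sep_mem_path_aux (hT : T.IsTree) {W : Finset V} {v : V} (hv : v ∈ W) :
    ∀ N (b : V), b ∈ W → b ≠ v → ∀ p : T.Walk v b, p.IsPath → p.length ≤ N →
      ∃ s ∈ sep hT W v, s ∈ p.support := by
  intro N
  induction N with
  | zero =>
    intro b hb hne p _ hl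
    exact absurd (p.eq_of_length_eq_zero (Nat.le_zero.mp hl)).symm hne
  | succ N ih =>
    intro b hb hne p hp hl
    by_cases h : ∀ u ∈ p.support, u ∈ W → u = v ∨ u = b
    · refine ⟨b, ?_, p.end_mem_support⟩
      rw [mem_sep_iff]
      refine ⟨hb, hne, ?_⟩
      rw [← tpath_eq hT hp]
      exact h
    · push_neg at h
      obtain ⟨u, hus, huW, huv, hub⟩ := h
      have hq : (p.takeUntil u hus).IsPath := hp.takeUntil hus
      have hlen : (p.takeUntil u hus).length ≤ N := by
        have h1 := congrArg Walk.length (p.take_spec hus)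
        rw [Walk.length_append] at h1
        have hd : (p.dropUntil u hus).length ≠ 0 := fun h0 =>
          hub ((p.dropUntil u hus).eq_of_length_eq_zero h0)
        omega
      obtain ⟨s, hs, hsp⟩ := ih u huW huv _ hq hlen
      exact ⟨s, hs, p.support_takeUntil_subset hus hsp⟩

lemma exists_sep_mem (hT : T.IsTree) {W : Finset V} {v b : V} (hv : v ∈ W)
    (hb : b ∈ W) (hne : b ≠ v) (p : T.Walk v b) :
    ∃ s ∈ sep hT W v, s ∈ p.support := by
  obtain ⟨s, hs, hsp⟩ := exists_sep_mem_path_aux hT hv p.bypass.length b hb hne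
    p.bypass (p.bypass_isPath) le_rfl
  exact ⟨s, hs, p.support_bypass_subset hsp⟩

lemma sep_nonempty (hT : T.IsTree) {W : Finset V} {v : V} (hv : v ∈ W)
    (hW : 2 ≤ W.card) : (sep hT W v).Nonempty := by
  obtain ⟨b, hb, hne⟩ := Finset.exists_mem_ne (s := W) (by omega) v
  obtain ⟨s, hs, _⟩ := exists_sep_mem hT hv hb hne (tpath hT v b)
  exact ⟨s, hs⟩


open scoped Classical in
lemma sep_univ (hT : T.IsTree) (v : V) :
    sep hT (univ : Finset V) v = T.neighborFinset v := by
  ext w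
  rw [mem_sep_iff, mem_neighborFinset]
  constructor
  · rintro ⟨-, hne, hcond⟩
    have hpath := tpath_isPath hT v w
    have hsub : ∀ u ∈ (tpath hT v w).support, u = v ∨ u = w := fun u hu =>
      hcond u hu (mem_univ u)
    have hlen : (tpath hT v w).length = 1 := by
      have hnd : (tpath hT v w).support.Nodup := hpath.support_nodup
      have hcard : (tpath hT v w).support.length = (tpath hT v w).support.toFinset.card :=
        (List.toFinset_card_of_nodup hnd).symm
      have hsub2 : (tpath hT v w).support.toFinset ⊆ {v, w} := by
        intro u hu
        rw [List.mem_toFinset] at hu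
        rcases hsub u hu with h | h <;> simp [h]
      have h2 : (tpath hT v w).support.toFinset.card ≤ 2 :=
        le_trans (Finset.card_le_card hsub2)
          (le_trans (Finset.card_insert_le _ _) (by simp))
      have h3 : (tpath hT v w).support.length = (tpath hT v w).length + 1 :=
        Walk.length_support _
      have h4 : (tpath hT v w).length ≠ 0 := fun h0 =>
        hne ((tpath hT v w).eq_of_length_eq_zero h0).symm
      omega
    exact Walk.adj_of_length_eq_one hlen
  · intro hadj
    have hp : (Walk.cons hadj Walk.nil).IsPath := by
      simp [Walk.cons_isPath_iff, hadj.ne]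
    refine ⟨mem_univ w, fun h => hadj.ne h.symm, ?_⟩
    rw [← tpath_eq hT hp]
    intro u hu _
    simp only [Walk.support_cons, Walk.support_nil, List.mem_cons,
      List.mem_singleton, List.not_mem_nil, or_false] at hu
    tauto


open scoped Classical in
lemma sep_erase_subset (hT : T.IsTree) {W : Finset V} {v u : V} (hu : u ∈ W.erase v) :
    sep hT (W.erase v) u ⊆
      (sep hT W u).erase v ∪
        (if u ∈ sep hT W v then (sep hT W v).erase u else ∅) := by
  intro w hw
  rw [mem_sep_iff] at hw
  obtain ⟨hwW', hwu, hcond⟩ := hw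
  have hwv : w ≠ v := (Finset.mem_erase.1 hwW').1
  have hwW : w ∈ W := (Finset.mem_erase.1 hwW').2
  have huv : u ≠ v := (Finset.mem_erase.1 hu).1
  have huW : u ∈ W := (Finset.mem_erase.1 hu).2
  by_cases hv : v ∈ (tpath hT u w).support
  · -- v lies on the path from u to w
    have hp : (tpath hT u w).IsPath := tpath_isPath hT u w
    have hsplit := (tpath hT u w).take_spec hv
    have hnd : (((tpath hT u w).takeUntil v hv).support ++
        ((tpath hT u w).dropUntil v hv).support.tail).Nodup := by
      have h0 := hp.support_nodup
      conv at h0 => rw [← hsplit]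
      rw [Walk.support_append] at h0
      exact h0
    have hdisj : ∀ x, x ∈ ((tpath hT u w).takeUntil v hv).support →
        x ∈ ((tpath hT u w).dropUntil v hv).support.tail → False := by
      rw [List.nodup_append] at hnd
      exact fun x h1 h2 => hnd.2.2 x h1 x h2 rfl
    have hrmem : ∀ y, y ∈ ((tpath hT u w).dropUntil v hv).support → y ≠ v →
        y ∈ ((tpath hT u w).dropUntil v hv).support.tail := by
      intro y hy hyv
      rw [Walk.support_eq_cons] at hy
      rcases List.mem_cons.1 hy with h | h
      · exact absurd h hyv
      · exact h
    have hqsub := (tpath hT u w).support_takeUntil_subset hv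
    have hrsub := (tpath hT u w).support_dropUntil_subset hv
    have hwq : w ∉ ((tpath hT u w).takeUntil v hv).support := fun hwq =>
      hdisj w hwq (hrmem w (Walk.end_mem_support _) hwv)
    have hur : u ∉ ((tpath hT u w).dropUntil v hv).support.tail := fun h =>
      hdisj u (Walk.start_mem_support _) h
    have hu_sep : u ∈ sep hT W v := by
      rw [mem_sep_iff]
      refine ⟨huW, huv, ?_⟩
      have hq : tpath hT v u = ((tpath hT u w).takeUntil v hv).reverse :=
        (tpath_eq hT (hp.takeUntil hv).reverse).symm
      rw [hq, Walk.support_reverse]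
      intro x hx hxW
      rw [List.mem_reverse] at hx
      by_cases hxv : x = v
      · exact Or.inl hxv
      · rcases hcond x (hqsub hx) (Finset.mem_erase.2 ⟨hxv, hxW⟩) with h | h
        · exact Or.inr h
        · subst h; exact absurd hx hwq
    have hw_sep : w ∈ sep hT W v := by
      rw [mem_sep_iff]
      refine ⟨hwW, hwv, ?_⟩
      have hr : tpath hT v w = (tpath hT u w).dropUntil v hv :=
        (tpath_eq hT (hp.dropUntil hv)).symm
      rw [hr]
      intro x hx hxW
      by_cases hxv : x = v
      · exact Or.inl hxv
      · rcases hcond x (hrsub hx) (Finset.mem_erase.2 ⟨hxv, hxW⟩) with h | h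
        · subst h; exact absurd (hrmem x hx hxv) hur
        · exact Or.inr h
    rw [if_pos hu_sep]
    exact Finset.mem_union_right _ (Finset.mem_erase.2 ⟨hwu, hw_sep⟩)
  · -- v not on the path
    refine Finset.mem_union_left _ (Finset.mem_erase.2 ⟨hwv, ?_⟩)
    rw [mem_sep_iff]
    refine ⟨hwW, hwu, ?_⟩
    intro x hx hxW
    have hxv : x ≠ v := fun h => hv (h ▸ hx)
    exact hcond x hx (Finset.mem_erase.2 ⟨hxv, hxW⟩)


noncomputable def degsum (hT : T.IsTree) (W : Finset V) : ℕ :=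
  ∑ u ∈ W, (sep hT W u).card

lemma degsum_erase (hT : T.IsTree) {W : Finset V} {v : V} (hv : v ∈ W)
    (hW : 2 ≤ W.card) (hgood : (sep hT W v).card ≤ 2) :
    degsum hT (W.erase v) + 2 ≤ degsum hT W := by
  classical
  set d := (sep hT W v).card with hd
  have hd1 : 1 ≤ d := (sep_nonempty hT hv hW).card_pos
  have hb : ∀ u ∈ W.erase v, (sep hT (W.erase v) u).card ≤
      ((sep hT W u).erase v).card + (if u ∈ sep hT W v then d - 1 else 0) := by
    intro u hu
    refine le_trans (Finset.card_le_card (sep_erase_subset hT hu)) ?_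
    refine le_trans (Finset.card_union_le _ _) ?_
    gcongr
    by_cases h : u ∈ sep hT W v
    · rw [if_pos h, if_pos h, Finset.card_erase_of_mem h]
    · rw [if_neg h, if_neg h, Finset.card_empty]
  have hsum1 : ∑ u ∈ W.erase v, (if u ∈ sep hT W v then d - 1 else 0) = d * (d - 1) := by
    rw [Finset.sum_ite_mem]
    rw [Finset.inter_eq_right.2 (sep_subset hT W v)]
    rw [Finset.sum_const, smul_eq_mul]
  have hptwise : ∀ u ∈ W.erase v,
      ((sep hT W u).erase v).card + (if v ∈ sep hT W u then 1 else 0) =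
        (sep hT W u).card := by
    intro u hu
    by_cases h : v ∈ sep hT W u
    · rw [if_pos h, Finset.card_erase_of_mem h]
      have : 1 ≤ (sep hT W u).card := Finset.card_pos.2 ⟨v, h⟩
      omega
    · rw [if_neg h, Finset.erase_eq_of_notMem h, add_zero]
  have hfilter : ((W.erase v).filter (fun u => v ∈ sep hT W u)).card = d := by
    rw [hd]
    congr 1
    ext u
    simp only [Finset.mem_filter]
    constructor
    · rintro ⟨hu, h⟩
      exact (sep_comm hT hv ((Finset.mem_erase.1 hu).2)).2 h
    · intro h
      have huv := sep_subset hT W v h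
      exact ⟨huv, (sep_comm hT hv ((Finset.mem_erase.1 huv).2)).1 h⟩
  have hsum2 : ∑ u ∈ W.erase v, ((sep hT W u).erase v).card + d =
      ∑ u ∈ W.erase v, (sep hT W u).card := by
    rw [← Finset.sum_congr rfl hptwise, Finset.sum_add_distrib]
    congr 1
    rw [← Finset.sum_filter]
    simp [hfilter]
  have htotal : ∑ u ∈ W.erase v, (sep hT W u).card + d = degsum hT W :=
    Finset.sum_erase_add W _ hv
  have hDW' : degsum hT (W.erase v) ≤
      ∑ u ∈ W.erase v, ((sep hT W u).erase v).card + d * (d - 1) := by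
    unfold degsum
    calc ∑ u ∈ W.erase v, (sep hT (W.erase v) u).card
        ≤ ∑ u ∈ W.erase v, (((sep hT W u).erase v).card +
            (if u ∈ sep hT W v then d - 1 else 0)) := Finset.sum_le_sum hb
      _ = ∑ u ∈ W.erase v, ((sep hT W u).erase v).card + d * (d - 1) := by
            rw [Finset.sum_add_distrib, hsum1]
  have hdd : d * (d - 1) + 2 ≤ 2 * d := by interval_cases d <;> omega
  omega


open scoped Classical in
lemma degsum_univ (hT : T.IsTree) :
    degsum hT (univ : Finset V) = 2 * Fintype.card V - 2 := by
  unfold degsum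
  have h1 : ∀ v, (sep hT univ v).card = T.degree v := by
    intro v
    rw [sep_univ]
    unfold SimpleGraph.degree SimpleGraph.neighborFinset
    congr 1
  rw [Finset.sum_congr rfl (fun v _ => h1 v)]
  rw [SimpleGraph.sum_degrees_eq_twice_card_edges]
  have := hT.card_edgeFinset
  omega

variable {TP TQ : SimpleGraph V}

lemma exists_good (hTP : TP.IsTree) (hTQ : TQ.IsTree) {W : Finset V} (hW : 2 ≤ W.card)
    (hP : degsum hTP W ≤ 2 * W.card - 2) (hQ : degsum hTQ W ≤ 2 * W.card - 2) :
    ∃ v ∈ W, (sep hTP W v).card ≤ 2 ∧ (sep hTQ W v).card ≤ 2 := by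
  by_contra h
  push_neg at h
  have hbound : ∀ v ∈ W, 4 ≤ (sep hTP W v).card + (sep hTQ W v).card := by
    intro v hv
    have h1 : 1 ≤ (sep hTP W v).card := (sep_nonempty hTP hv hW).card_pos
    have h2 : 1 ≤ (sep hTQ W v).card := (sep_nonempty hTQ hv hW).card_pos
    rcases le_or_gt (sep hTP W v).card 2 with hc | hc
    · have := h v hv hc; omega
    · omega
  have hsum : 4 * W.card ≤ degsum hTP W + degsum hTQ W := by
    calc 4 * W.card = ∑ _v ∈ W, 4 := by rw [Finset.sum_const, smul_eq_mul, mul_comm]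
    _ ≤ ∑ v ∈ W, ((sep hTP W v).card + (sep hTQ W v).card) := Finset.sum_le_sum hbound
    _ = _ := Finset.sum_add_distrib
  omega

lemma build (hTP : TP.IsTree) (hTQ : TQ.IsTree) :
    ∀ (k : ℕ) (W : Finset V), W.card = k →
      degsum hTP W ≤ 2 * k - 2 → degsum hTQ W ≤ 2 * k - 2 →
      ∃ e : Fin k → V, Function.Injective e ∧ Finset.univ.image e = W ∧
        ∀ i : Fin k, 0 < i.val →
          (sep hTP ((Finset.Iic i).image e) (e i)).card ≤ 2 ∧
          (sep hTQ ((Finset.Iic i).image e) (e i)).card ≤ 2 := by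
  intro k
  induction k with
  | zero =>
    intro W hcard _ _
    refine ⟨Fin.elim0, fun i => i.elim0, ?_, fun i => i.elim0⟩
    rw [Finset.card_eq_zero] at hcard
    simp [hcard]
  | succ k ih =>
    intro W hcard hP hQ
    rcases Nat.eq_zero_or_pos k with hk | hk
    · subst hk
      obtain ⟨v, hv⟩ := Finset.card_eq_one.1 hcard
      refine ⟨fun _ => v, fun a b _ => by
        have := a.isLt; have := b.isLt; exact Fin.ext (by omega), ?_, ?_⟩
      · subst hv; ext y; simp
      · intro i hi
        have := i.isLt
        omega
    · have hW2 : 2 ≤ W.card := by omega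
      obtain ⟨v, hv, hgP, hgQ⟩ := exists_good hTP hTQ hW2 (by rw [hcard]; exact hP)
        (by rw [hcard]; exact hQ)
      have hcard' : (W.erase v).card = k := by rw [Finset.card_erase_of_mem hv, hcard]; omega
      have hP' : degsum hTP (W.erase v) ≤ 2 * k - 2 := by
        have := degsum_erase hTP hv hW2 hgP; omega
      have hQ' : degsum hTQ (W.erase v) ≤ 2 * k - 2 := by
        have := degsum_erase hTQ hv hW2 hgQ; omega
      obtain ⟨e', hinj', himg', hprop'⟩ := ih (W.erase v) hcard' hP' hQ'
      have hrange : ∀ j, e' j ∈ W.erase v := fun j =>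
        himg' ▸ Finset.mem_image_of_mem _ (Finset.mem_univ j)
      have hnev : ∀ j, e' j ≠ v := fun j => (Finset.mem_erase.1 (hrange j)).1
      have hinj : Function.Injective (Fin.snoc e' v : Fin (k+1) → V) := by
        intro a b hab
        induction a using Fin.lastCases with
        | last =>
          induction b using Fin.lastCases with
          | last => rfl
          | cast j =>
            rw [Fin.snoc_last, Fin.snoc_castSucc] at hab
            exact absurd hab.symm (hnev j)
        | cast j =>
          induction b using Fin.lastCases with
          | last =>
            rw [Fin.snoc_last, Fin.snoc_castSucc] at hab
            exact absurd hab (hnev j)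
          | cast m =>
            rw [Fin.snoc_castSucc, Fin.snoc_castSucc] at hab
            exact congrArg Fin.castSucc (hinj' hab)
      have himg : Finset.univ.image (Fin.snoc e' v : Fin (k+1) → V) = W := by
        ext y
        simp only [Finset.mem_image, Finset.mem_univ, true_and]
        constructor
        · rintro ⟨i, rfl⟩
          induction i using Fin.lastCases with
          | last => rw [Fin.snoc_last]; exact hv
          | cast j =>
            rw [Fin.snoc_castSucc]
            exact (Finset.mem_erase.1 (hrange j)).2
        · intro hy
          by_cases hyv : y = v
          · exact ⟨Fin.last k, by rw [Fin.snoc_last, hyv]⟩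
          · have : y ∈ W.erase v := Finset.mem_erase.2 ⟨hyv, hy⟩
            rw [← himg'] at this
            obtain ⟨j, -, rfl⟩ := Finset.mem_image.1 this
            exact ⟨j.castSucc, Fin.snoc_castSucc ..⟩
      refine ⟨Fin.snoc e' v, hinj, himg, ?_⟩
      intro i hi
      induction i using Fin.lastCases with
      | last =>
        have hIic : (Finset.Iic (Fin.last k)).image (Fin.snoc e' v : Fin (k+1) → V) = W := by
          rw [show Finset.Iic (Fin.last k) = Finset.univ from by ext m; simp [Fin.le_last]]
          exact himg
        rw [hIic, Fin.snoc_last]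
        exact ⟨hgP, hgQ⟩
      | cast j =>
        have hj : 0 < j.val := hi
        have hIic : (Finset.Iic j.castSucc).image (Fin.snoc e' v : Fin (k+1) → V) =
            (Finset.Iic j).image e' := by
          ext y
          simp only [Finset.mem_image, Finset.mem_Iic]
          constructor
          · rintro ⟨m, hm, rfl⟩
            have hlt : m.val < k := by
              have h1 : m.val ≤ j.val := hm
              have := j.isLt
              omega
            refine ⟨⟨m.val, hlt⟩, hm, ?_⟩
            exact ((congrArg (Fin.snoc e' v)
              (show m = Fin.castSucc ⟨m.val, hlt⟩ from Fin.ext rfl)).trans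
              (Fin.snoc_castSucc ..)).symm
          · rintro ⟨m, hm, rfl⟩
            exact ⟨m.castSucc, by simpa [Fin.castSucc_le_castSucc_iff] using hm,
              Fin.snoc_castSucc ..⟩
        rw [hIic, Fin.snoc_castSucc]
        exact hprop' j hj

set_option maxHeartbeats 1000000 in
lemma markov_step {α : V → Type*} [∀ v, Fintype (α v)]
    (hT : T.IsTree) {R : (∀ v, α v) → ℝ} (hM : IsTreeMarkov T R)
    {W S : Finset V} {v : V} (hv : v ∈ W) (hSsub : sep hT W v ⊆ S)
    (hSW : S ⊆ W.erase v) (x : ∀ v, α v) :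
    marg R W (fun u => x u.1) * marg R S (fun u => x u.1) =
      marg R (W.erase v) (fun u => x u.1) *
        marg R (insert v S) (fun u => x u.1) := by
  classical
  have hsep : ∀ a ∈ ({v} : Finset V), ∀ b ∈ (W.erase v) \ S, ∀ p : T.Walk a b,
      ∃ s ∈ S, s ∈ p.support := by
    intro a ha b hb p
    rw [Finset.mem_singleton] at ha
    subst ha
    rw [Finset.mem_sdiff, Finset.mem_erase] at hb
    obtain ⟨⟨hbv, hbW⟩, -⟩ := hb
    obtain ⟨s, hs, hsp⟩ := exists_sep_mem hT hv hbW hbv p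
    exact ⟨s, hSsub hs, hsp⟩
  have key := hM {v} ((W.erase v) \ S) S hsep x
  have h1 : ({v} : Finset V) ∪ ((W.erase v) \ S) ∪ S = W := by
    rw [Finset.union_assoc, Finset.sdiff_union_self_eq_union,
      Finset.union_eq_left.2 hSW]
    rw [← Finset.insert_eq, Finset.insert_erase hv]
  have h2 : ({v} : Finset V) ∪ S = insert v S := (Finset.insert_eq v S).symm
  have h3 : ((W.erase v) \ S) ∪ S = W.erase v := by
    rw [Finset.sdiff_union_self_eq_union, Finset.union_eq_left.2 hSW]
  rw [h1, h2, h3] at key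
  exact key.trans (mul_comm _ _)

end TreeSep

set_option maxHeartbeats 1000000 in
/-- **Common factorization for two tree-structured distributions.**
If `P` and `Q` are joint distributions on the same set of `n` finitely-valued
variables, `P` Markov with respect to a tree `TP` and `Q` Markov with respect to a
(possibly distinct) tree `TQ`, then there is an ordering `σ : Fin n ≃ V` of the nodes
and sets `Par i ⊆ {0,…,i-1}` of cardinality at most `5` such that both `P` and `Q`
factorize along this ordering with conditioning sets `Par i`; the factorization is
expressed equivalently via marginals: for each `i ≠ 0`, the marginal on the first
`i+1` variables times the marginal on `Par i` equals the marginal on the first `i`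
variables times the marginal on `{i} ∪ Par i`, pointwise. -/
theorem two_trees_common_factorization
    {V : Type*} [Fintype V] [DecidableEq V] (α : V → Type*) [∀ v, Fintype (α v)]
    (TP TQ : SimpleGraph V) (hTP : TP.IsTree) (hTQ : TQ.IsTree)
    (P Q : (∀ v, α v) → ℝ)
    (hP0 : ∀ x, 0 ≤ P x) (hP1 : ∑ x, P x = 1)
    (hQ0 : ∀ x, 0 ≤ Q x) (hQ1 : ∑ x, Q x = 1)
    (hPMarkov : IsTreeMarkov TP P) (hQMarkov : IsTreeMarkov TQ Q)
    {n : ℕ} (hn : n = Fintype.card V) :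
    ∃ (σ : Fin n ≃ V) (Par : Fin n → Finset (Fin n)),
      (∀ i : Fin n, Par i ⊆ Finset.Iio i ∧ (Par i).card ≤ 5) ∧
      (∀ i : Fin n, 0 < i.val → ∀ x : ∀ v, α v,
        marg P ((Finset.Iic i).image σ) (fun v => x v.1) *
            marg P ((Par i).image σ) (fun v => x v.1) =
          marg P ((Finset.Iio i).image σ) (fun v => x v.1) *
            marg P ((insert i (Par i)).image σ) (fun v => x v.1)) ∧
      (∀ i : Fin n, 0 < i.val → ∀ x : ∀ v, α v,
        marg Q ((Finset.Iic i).image σ) (fun v => x v.1) *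
            marg Q ((Par i).image σ) (fun v => x v.1) =
          marg Q ((Finset.Iio i).image σ) (fun v => x v.1) *
            marg Q ((insert i (Par i)).image σ) (fun v => x v.1)) := by
  classical
  obtain ⟨e, hinj, himg, hprop⟩ := build hTP hTQ n Finset.univ
    (by rw [Finset.card_univ, hn])
    (by rw [degsum_univ hTP, hn]) (by rw [degsum_univ hTQ, hn])
  have hsurj : Function.Surjective e := by
    intro y
    have hy : y ∈ Finset.univ.image e := by rw [himg]; exact Finset.mem_univ y
    obtain ⟨i, -, hi⟩ := Finset.mem_image.1 hy
    exact ⟨i, hi⟩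
  refine ⟨Equiv.ofBijective e ⟨hinj, hsurj⟩,
    fun i => (Finset.Iio i).filter
      (fun j => e j ∈ sep hTP ((Finset.Iic i).image e) (e i) ∪
        sep hTQ ((Finset.Iic i).image e) (e i)), ?_, ?_, ?_⟩
  case _ =>
    intro i
    refine ⟨Finset.filter_subset _ _, ?_⟩
    beta_reduce
    rcases Nat.eq_zero_or_pos i.val with h0 | h0
    · have hempty : Finset.Iio i = (∅ : Finset (Fin n)) := by
        ext j
        simp only [Finset.mem_Iio, Finset.notMem_empty, iff_false]
        intro hj
        rw [Fin.lt_def] at hj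
        omega
      refine le_trans (Finset.card_le_card (Finset.filter_subset _ _)) ?_
      rw [hempty]
      simp
    · have h1 : ((Finset.Iio i).filter
          (fun j => e j ∈ sep hTP ((Finset.Iic i).image e) (e i) ∪
            sep hTQ ((Finset.Iic i).image e) (e i))).card ≤
          (sep hTP ((Finset.Iic i).image e) (e i) ∪
            sep hTQ ((Finset.Iic i).image e) (e i)).card :=
        Finset.card_le_card_of_injOn e
          (fun j hj => (Finset.mem_filter.1 hj).2) hinj.injOn
      have h2 := Finset.card_union_le (sep hTP ((Finset.Iic i).image e) (e i))
        (sep hTQ ((Finset.Iic i).image e) (e i))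
      have h3 := hprop i h0
      omega
  next =>
    intro i hi x
    have hvW : e i ∈ (Finset.Iic i).image e :=
      Finset.mem_image_of_mem e (Finset.mem_Iic.2 le_rfl)
    have hSW : sep hTP ((Finset.Iic i).image e) (e i) ∪
        sep hTQ ((Finset.Iic i).image e) (e i) ⊆ ((Finset.Iic i).image e).erase (e i) :=
      Finset.union_subset (sep_subset _ _ _) (sep_subset _ _ _)
    have hErase : ((Finset.Iic i).image e).erase (e i) = (Finset.Iio i).image e := by
      ext y
      simp only [Finset.mem_erase, Finset.mem_image, Finset.mem_Iic, Finset.mem_Iio]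
      constructor
      · rintro ⟨hy, m, hm, rfl⟩
        exact ⟨m, lt_of_le_of_ne hm (fun h => hy (congrArg e h)), rfl⟩
      · rintro ⟨m, hm, rfl⟩
        exact ⟨fun h => (ne_of_lt hm) (hinj h), m, le_of_lt hm, rfl⟩
    have hParimg : ((Finset.Iio i).filter
        (fun j => e j ∈ sep hTP ((Finset.Iic i).image e) (e i) ∪
          sep hTQ ((Finset.Iic i).image e) (e i))).image e =
        sep hTP ((Finset.Iic i).image e) (e i) ∪
          sep hTQ ((Finset.Iic i).image e) (e i) := by
      ext y
      simp only [Finset.mem_image, Finset.mem_filter]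
      constructor
      · rintro ⟨j, ⟨-, hj⟩, rfl⟩
        exact hj
      · intro hy
        have hy2 := hSW hy
        rw [hErase] at hy2
        obtain ⟨m, hm, rfl⟩ := Finset.mem_image.1 hy2
        exact ⟨m, ⟨hm, hy⟩, rfl⟩
    show marg _ ((Finset.Iic i).image e) (fun v => x v.1) *
        marg _ (((Finset.Iio i).filter
          (fun j => e j ∈ sep hTP ((Finset.Iic i).image e) (e i) ∪
            sep hTQ ((Finset.Iic i).image e) (e i))).image e) (fun v => x v.1) =
      marg _ ((Finset.Iio i).image e) (fun v => x v.1) *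
        marg _ ((insert i ((Finset.Iio i).filter
          (fun j => e j ∈ sep hTP ((Finset.Iic i).image e) (e i) ∪
            sep hTQ ((Finset.Iic i).image e) (e i)))).image e) (fun v => x v.1)
    have hins : (insert i ((Finset.Iio i).filter
        (fun j => e j ∈ sep hTP ((Finset.Iic i).image e) (e i) ∪
          sep hTQ ((Finset.Iic i).image e) (e i)))).image e =
        insert (e i) (((Finset.Iio i).filter
        (fun j => e j ∈ sep hTP ((Finset.Iic i).image e) (e i) ∪
          sep hTQ ((Finset.Iic i).image e) (e i))).image e) :=
      Finset.image_insert e i _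
    have hstep := markov_step hTP hPMarkov hvW Finset.subset_union_left hSW x
    rw [← hParimg, hErase] at hstep
    rw [hins]
    exact hstep
  next =>
    intro i hi x
    have hvW : e i ∈ (Finset.Iic i).image e :=
      Finset.mem_image_of_mem e (Finset.mem_Iic.2 le_rfl)
    have hSW : sep hTP ((Finset.Iic i).image e) (e i) ∪
        sep hTQ ((Finset.Iic i).image e) (e i) ⊆ ((Finset.Iic i).image e).erase (e i) :=
      Finset.union_subset (sep_subset _ _ _) (sep_subset _ _ _)
    have hErase : ((Finset.Iic i).image e).erase (e i) = (Finset.Iio i).image e := by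
      ext y
      simp only [Finset.mem_erase, Finset.mem_image, Finset.mem_Iic, Finset.mem_Iio]
      constructor
      · rintro ⟨hy, m, hm, rfl⟩
        exact ⟨m, lt_of_le_of_ne hm (fun h => hy (congrArg e h)), rfl⟩
      · rintro ⟨m, hm, rfl⟩
        exact ⟨fun h => (ne_of_lt hm) (hinj h), m, le_of_lt hm, rfl⟩
    have hParimg : ((Finset.Iio i).filter
        (fun j => e j ∈ sep hTP ((Finset.Iic i).image e) (e i) ∪
          sep hTQ ((Finset.Iic i).image e) (e i))).image e =
        sep hTP ((Finset.Iic i).image e) (e i) ∪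
          sep hTQ ((Finset.Iic i).image e) (e i) := by
      ext y
      simp only [Finset.mem_image, Finset.mem_filter]
      constructor
      · rintro ⟨j, ⟨-, hj⟩, rfl⟩
        exact hj
      · intro hy
        have hy2 := hSW hy
        rw [hErase] at hy2
        obtain ⟨m, hm, rfl⟩ := Finset.mem_image.1 hy2
        exact ⟨m, ⟨hm, hy⟩, rfl⟩
    show marg _ ((Finset.Iic i).image e) (fun v => x v.1) *
        marg _ (((Finset.Iio i).filter
          (fun j => e j ∈ sep hTP ((Finset.Iic i).image e) (e i) ∪
            sep hTQ ((Finset.Iic i).image e) (e i))).image e) (fun v => x v.1) =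
      marg _ ((Finset.Iio i).image e) (fun v => x v.1) *
        marg _ ((insert i ((Finset.Iio i).filter
          (fun j => e j ∈ sep hTP ((Finset.Iic i).image e) (e i) ∪
            sep hTQ ((Finset.Iic i).image e) (e i)))).image e) (fun v => x v.1)
    have hins : (insert i ((Finset.Iio i).filter
        (fun j => e j ∈ sep hTP ((Finset.Iic i).image e) (e i) ∪
          sep hTQ ((Finset.Iic i).image e) (e i)))).image e =
        insert (e i) (((Finset.Iio i).filter
        (fun j => e j ∈ sep hTP ((Finset.Iic i).image e) (e i) ∪
          sep hTQ ((Finset.Iic i).image e) (e i))).image e) :=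
      Finset.image_insert e i _
    have hstep := markov_step hTQ hQMarkov hvW Finset.subset_union_right hSW x
    rw [← hParimg, hErase] at hstep
    rw [hins]
    exact hstep
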